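/- If a probability measure P on ℝ has exponential decay, then its Fourier transform t ↦ ∫_ℝ e^{its} dP(s) is a real-analytic function on ℝ. -/

import Mathlib

open MeasureTheory

noncomputable section

/-- A probability measure `P` on `ℝ` has exponential decay if there are `c, b > 0` with
`P((-∞,-t) ∪ (t,∞)) < c e^{-bt}` for every `t > 0`. -/
def HasExpDecay (P : Measure ℝ) : Prop :=
  ∃ c > (0 : ℝ), ∃ b > (0 : ℝ), ∀ t > (0 : ℝ),
    P (Set.Iio (-t) ∪ Set.Ioi t) < ENNReal.ofReal (c * Real.exp (-b * t))

/-- From exponential tail decay, `exp (a * |s|)` is integrable for `a` below the decay rate. -/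
lemma integrable_exp_abs_of_tail (P : Measure ℝ) [IsProbabilityMeasure P] {c b : ℝ}
    (hc : 0 < c)
    (htail : ∀ t > (0 : ℝ), P {s : ℝ | t ≤ |s|} ≤ ENNReal.ofReal (c * Real.exp (-b * t)))
    {a : ℝ} (ha : 0 < a) (hab : a < b) :
    Integrable (fun s : ℝ => Real.exp (a * |s|)) P := by
  have habs_cont : Continuous fun s : ℝ => Real.exp (a * |s|) :=
    Real.continuous_exp.comp (continuous_const.mul continuous_abs)
  have g_cont : Continuous fun t : ℝ => a * Real.exp (a * t) :=
    continuous_const.mul (Real.continuous_exp.comp (continuous_const.mul continuous_id))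
  -- layer cake
  have key := lintegral_comp_eq_lintegral_meas_le_mul (f := fun s : ℝ => |s|)
      (g := fun t : ℝ => a * Real.exp (a * t)) P
      (Filter.Eventually.of_forall fun s => abs_nonneg s)
      continuous_abs.aemeasurable
      (fun t _ => g_cont.intervalIntegrable 0 t)
      (Filter.Eventually.of_forall fun t =>
        mul_nonneg ha.le (Real.exp_pos _).le)
  have hint : ∀ x : ℝ, ∫ t in (0:ℝ)..x, a * Real.exp (a * t)
      = Real.exp (a * x) - 1 := by
    intro x
    have : ∀ t ∈ Set.uIcc (0:ℝ) x, HasDerivAt (fun t => Real.exp (a * t))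
        (a * Real.exp (a * t)) t := by
      intro t _
      have h1 : HasDerivAt (fun t : ℝ => a * t) a t := by
        simpa using (hasDerivAt_id t).const_mul a
      simpa [mul_comm] using h1.exp
    rw [intervalIntegral.integral_eq_sub_of_hasDerivAt this
      (g_cont.intervalIntegrable 0 x)]
    simp
  simp only [hint] at key
  -- bound the right-hand side
  have hd : 0 < b - a := by linarith
  have hbd : IntegrableOn (fun t : ℝ => (c * a) * Real.exp (-(b - a) * t)) (Set.Ioi 0) :=
    (exp_neg_integrableOn_Ioi 0 hd).const_mul (c * a)
  have hRHS : (∫⁻ t in Set.Ioi (0:ℝ), P {s : ℝ | t ≤ |s|}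
      * ENNReal.ofReal (a * Real.exp (a * t)))
      ≤ ∫⁻ t in Set.Ioi (0:ℝ), ENNReal.ofReal ((c * a) * Real.exp (-(b - a) * t)) := by
    refine setLIntegral_mono ((ENNReal.continuous_ofReal.comp
        (continuous_const.mul (Real.continuous_exp.comp
          (continuous_const.mul continuous_id)))).measurable) ?_
    intro t ht
    calc P {s : ℝ | t ≤ |s|} * ENNReal.ofReal (a * Real.exp (a * t))
        ≤ ENNReal.ofReal (c * Real.exp (-b * t)) * ENNReal.ofReal (a * Real.exp (a * t)) :=
          mul_le_mul_left (htail t ht) _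
      _ = ENNReal.ofReal ((c * Real.exp (-b * t)) * (a * Real.exp (a * t))) :=
          (ENNReal.ofReal_mul (by positivity)).symm
      _ = ENNReal.ofReal ((c * a) * Real.exp (-(b - a) * t)) := by
          rw [show (c * Real.exp (-b * t)) * (a * Real.exp (a * t))
              = (c * a) * (Real.exp (-b * t) * Real.exp (a * t)) by ring,
            ← Real.exp_add]
          ring_nf
  have hfin : (∫⁻ s, ENNReal.ofReal (Real.exp (a * |s|) - 1) ∂P) < ⊤ := by
    rw [key]
    exact lt_of_le_of_lt hRHS hbd.lintegral_lt_top
  -- conclude integrability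
  refine ⟨habs_cont.aestronglyMeasurable, ?_⟩
  rw [hasFiniteIntegral_iff_ofReal
    (Filter.Eventually.of_forall fun s => (Real.exp_pos _).le)]
  have hle : (∫⁻ s, ENNReal.ofReal (Real.exp (a * |s|)) ∂P)
      ≤ (∫⁻ s, ENNReal.ofReal (Real.exp (a * |s|) - 1) ∂P) + 1 := by
    have : (∫⁻ s, ENNReal.ofReal (Real.exp (a * |s|)) ∂P)
        ≤ ∫⁻ s, (ENNReal.ofReal (Real.exp (a * |s|) - 1) + 1) ∂P := by
      refine lintegral_mono fun s => ?_
      calc ENNReal.ofReal (Real.exp (a * |s|))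
          = ENNReal.ofReal ((Real.exp (a * |s|) - 1) + 1) := by ring_nf
        _ ≤ ENNReal.ofReal (Real.exp (a * |s|) - 1) + ENNReal.ofReal 1 :=
            ENNReal.ofReal_add_le
        _ = ENNReal.ofReal (Real.exp (a * |s|) - 1) + 1 := by simp
    calc (∫⁻ s, ENNReal.ofReal (Real.exp (a * |s|)) ∂P)
        ≤ ∫⁻ s, (ENNReal.ofReal (Real.exp (a * |s|) - 1) + 1) ∂P := this
      _ = (∫⁻ s, ENNReal.ofReal (Real.exp (a * |s|) - 1) ∂P) + 1 * P Set.univ := by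
          rw [lintegral_add_right _ measurable_const, lintegral_const]
      _ = (∫⁻ s, ENNReal.ofReal (Real.exp (a * |s|) - 1) ∂P) + 1 := by simp
  exact lt_of_le_of_lt hle (ENNReal.add_lt_top.2 ⟨hfin, ENNReal.one_lt_top⟩)

/-- If a probability measure `P` on `ℝ` has exponential decay, then its
Fourier transform `t ↦ ∫ e^{its} dP(s)` is a real-analytic function on `ℝ`. -/
theorem statement5 (P : Measure ℝ) [IsProbabilityMeasure P] (hP : HasExpDecay P) :
    ∀ t₀ : ℝ, AnalyticAt ℝ (fun t : ℝ => ∫ s, Complex.exp (Complex.I * t * s) ∂P) t₀ := by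
  obtain ⟨c, hc, b, hb, htail⟩ := hP
  -- tail bound for `{s | t ≤ |s|}` with rate `b/2`
  have htail' : ∀ t > (0 : ℝ), P {s : ℝ | t ≤ |s|}
      ≤ ENNReal.ofReal (c * Real.exp (-(b/2) * t)) := by
    intro t ht
    have hsub : {s : ℝ | t ≤ |s|} ⊆ Set.Iio (-(t/2)) ∪ Set.Ioi (t/2) := by
      intro s hs
      simp only [Set.mem_setOf_eq] at hs
      rcases abs_cases s with ⟨h1, _⟩ | ⟨h1, _⟩
      · right; simp only [Set.mem_Ioi]; linarith
      · left; simp only [Set.mem_Iio]; linarith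
    calc P {s : ℝ | t ≤ |s|} ≤ P (Set.Iio (-(t/2)) ∪ Set.Ioi (t/2)) := measure_mono hsub
      _ ≤ ENNReal.ofReal (c * Real.exp (-b * (t/2))) := (htail (t/2) (by linarith)).le
      _ = ENNReal.ofReal (c * Real.exp (-(b/2) * t)) := by ring_nf
  set a : ℝ := b / 4 with ha_def
  have ha : 0 < a := by positivity
  -- integrability facts
  have hexp1 : Integrable (fun s : ℝ => Real.exp (a * |s|)) P :=
    integrable_exp_abs_of_tail P hc htail' ha (by rw [ha_def]; linarith)
  have hexp2 : Integrable (fun s : ℝ => Real.exp ((3 * b / 8) * |s|)) P :=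
    integrable_exp_abs_of_tail P hc htail' (by positivity) (by linarith)
  have hbound_int : Integrable (fun s : ℝ => (8 / b) * Real.exp ((3 * b / 8) * |s|)) P :=
    hexp2.const_mul _
  -- pointwise bound : |s| * exp (a * |s|) ≤ (8/b) * exp ((3b/8)|s|)
  have hptb : ∀ s : ℝ, |s| * Real.exp (a * |s|)
      ≤ (8 / b) * Real.exp ((3 * b / 8) * |s|) := by
    intro s
    have h1 : (b / 8) * |s| ≤ Real.exp ((b / 8) * |s|) :=
      (Real.add_one_le_exp _).trans' (by linarith)
    have h2 : |s| ≤ (8 / b) * Real.exp ((b / 8) * |s|) := by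
      have := mul_le_mul_of_nonneg_left h1 (le_of_lt (by positivity : (0:ℝ) < 8 / b))
      calc |s| = (8 / b) * ((b / 8) * |s|) := by field_simp
        _ ≤ (8 / b) * Real.exp ((b / 8) * |s|) := this
    calc |s| * Real.exp (a * |s|)
        ≤ ((8 / b) * Real.exp ((b / 8) * |s|)) * Real.exp (a * |s|) :=
          mul_le_mul_of_nonneg_right h2 (Real.exp_pos _).le
      _ = (8 / b) * Real.exp ((3 * b / 8) * |s|) := by
          rw [mul_assoc, ← Real.exp_add, ha_def]; ring_nf
  -- the complex extension
  set F : ℂ → ℂ := fun z => ∫ s, Complex.exp (Complex.I * z * s) ∂P with hF_def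
  -- norm of the integrand
  have hnorm : ∀ (z : ℂ) (s : ℝ), ‖Complex.exp (Complex.I * z * s)‖
      = Real.exp (-z.im * s) := by
    intro z s
    rw [Complex.norm_exp]
    congr 1
    simp [Complex.mul_re, Complex.mul_im]
  have hnorm_le : ∀ (z : ℂ) (s : ℝ), |z.im| ≤ a →
      ‖Complex.exp (Complex.I * z * s)‖ ≤ Real.exp (a * |s|) := by
    intro z s hz
    rw [hnorm]
    refine Real.exp_le_exp.2 ?_
    calc -z.im * s ≤ |(-z.im) * s| := le_abs_self _
      _ = |z.im| * |s| := by rw [abs_mul, abs_neg]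
      _ ≤ a * |s| := mul_le_mul_of_nonneg_right hz (abs_nonneg _)
  have hcont : ∀ z : ℂ, Continuous fun s : ℝ => Complex.exp (Complex.I * z * s) := by
    intro z
    exact Complex.continuous_exp.comp (continuous_const.mul Complex.continuous_ofReal)
  have hcont' : ∀ z : ℂ, Continuous fun s : ℝ =>
      (Complex.I * s) * Complex.exp (Complex.I * z * s) := by
    intro z
    exact (continuous_const.mul Complex.continuous_ofReal).mul (hcont z)
  -- F is differentiable on the strip
  have hdiff : ∀ z₀ : ℂ, |z₀.im| < a → DifferentiableAt ℂ F z₀ := by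
    intro z₀ hz₀
    set ε : ℝ := a - |z₀.im| with hε_def
    have hε : 0 < ε := by simp only [hε_def]; linarith
    have him : ∀ z ∈ Metric.ball z₀ ε, |z.im| ≤ a := by
      intro z hz
      have h1 : |z.im - z₀.im| ≤ ‖z - z₀‖ := by
        simpa using Complex.abs_im_le_norm (z - z₀)
      have h2 : ‖z - z₀‖ < ε := by simpa [Metric.mem_ball, dist_eq_norm] using hz
      calc |z.im| ≤ |z.im - z₀.im| + |z₀.im| := by
            simpa using abs_add_le (z.im - z₀.im) z₀.im
        _ ≤ ‖z - z₀‖ + |z₀.im| := by linarith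
        _ ≤ a := by simp only [hε_def] at h2; linarith
    have key := hasDerivAt_integral_of_dominated_loc_of_deriv_le (μ := P)
      (F := fun (z : ℂ) (s : ℝ) => Complex.exp (Complex.I * z * s))
      (F' := fun (z : ℂ) (s : ℝ) => (Complex.I * s) * Complex.exp (Complex.I * z * s))
      (x₀ := z₀) (bound := fun s => (8 / b) * Real.exp ((3 * b / 8) * |s|)) (Metric.ball_mem_nhds z₀ hε)
      (Filter.Eventually.of_forall fun z => (hcont z).aestronglyMeasurable)
      ?_ ((hcont' z₀).aestronglyMeasurable) ?_ hbound_int ?_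
    · exact key.2.differentiableAt
    · -- integrability of F z₀
      refine (hexp1.mono ((hcont z₀).aestronglyMeasurable)
        (Filter.Eventually.of_forall fun s => ?_))
      rw [Real.norm_eq_abs, abs_of_nonneg (Real.exp_pos _).le]
      exact hnorm_le z₀ s hz₀.le
    · -- derivative bound
      refine Filter.Eventually.of_forall fun s => fun z hz => ?_
      calc ‖(Complex.I * s) * Complex.exp (Complex.I * z * s)‖
          = ‖(Complex.I * (s:ℂ))‖ * ‖Complex.exp (Complex.I * z * s)‖ := norm_mul _ _
        _ ≤ |s| * Real.exp (a * |s|) := by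
            refine mul_le_mul ?_ (hnorm_le z s (him z hz)) (norm_nonneg _) (abs_nonneg _)
            simp [Complex.norm_real]
        _ ≤ (8 / b) * Real.exp ((3 * b / 8) * |s|) := hptb s
    · -- differentiability of the integrand
      refine Filter.Eventually.of_forall fun s => fun z hz => ?_
      have h1 : HasDerivAt (fun z : ℂ => (Complex.I * (s:ℂ)) * z) (Complex.I * s) z := by
        simpa using (hasDerivAt_id z).const_mul (Complex.I * (s:ℂ))
      have h2 := h1.cexp
      have heq : ∀ w : ℂ, Complex.I * (s:ℂ) * w = Complex.I * w * s := fun w => by ring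
      simp only [heq] at h2
      simpa [mul_comm] using h2
  -- complex analyticity at real points, then restrict scalars
  intro t₀
  have hS : IsOpen {z : ℂ | z.im ∈ Set.Ioo (-a) a} := isOpen_Ioo.preimage Complex.continuous_im
  have hdiffOn : DifferentiableOn ℂ F {z : ℂ | z.im ∈ Set.Ioo (-a) a} := by
    intro z hz
    exact (hdiff z (abs_lt.2 ⟨hz.1, hz.2⟩)).differentiableWithinAt
  have hmem : {z : ℂ | z.im ∈ Set.Ioo (-a) a} ∈ nhds (t₀ : ℂ) := by
    refine hS.mem_nhds ?_
    simp only [Set.mem_setOf_eq, Complex.ofReal_im, Set.mem_Ioo]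
    constructor <;> linarith
  have hAC : AnalyticAt ℂ F (t₀ : ℂ) := hdiffOn.analyticAt hmem
  have hcomp : AnalyticAt ℝ (F ∘ Complex.ofReal) t₀ :=
    (hAC.restrictScalars).comp (Complex.ofRealCLM.analyticAt t₀)
  exact hcomp
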